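/- If A is a nonzero Hermitian n×n matrix with all entries real and non-positive, and A is conditionally positive definite, then A has exactly one negative eigenvalue. -/

import Mathlib

open ComplexOrder Matrix

private lemma form_eq_dot {n : ℕ} (A : Matrix (Fin n) (Fin n) ℂ) (v : Fin n → ℂ) :
    ∑ i, ∑ j, (starRingEnd ℂ) (v i) * A i j * v j = dotProduct (star v) (A *ᵥ v) := by
  simp [dotProduct, Matrix.mulVec, Finset.mul_sum, mul_assoc]

theorem stmt10 (n : ℕ) (A : Matrix (Fin n) (Fin n) ℂ) (hA : A.IsHermitian)
    (hne : A ≠ 0)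
    (hentries : ∀ i j, (A i j).im = 0 ∧ (A i j).re ≤ 0)
    (hcpd : ∀ v : Fin n → ℂ, (∑ i, v i) = 0 →
        0 ≤ ∑ i, ∑ j, (starRingEnd ℂ) (v i) * A i j * v j) :
    (Finset.univ.filter (fun i => hA.eigenvalues i < 0)).card = 1 := by
  -- orthonormality of the eigenvector basis as dot products
  have horth : ∀ k l, dotProduct (star (⇑(hA.eigenvectorBasis k)))
      (⇑(hA.eigenvectorBasis l)) = if k = l then 1 else 0 := by
    intro k l
    have := (orthonormal_iff_ite.mp hA.eigenvectorBasis.orthonormal) k l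
    rw [EuclideanSpace.inner_eq_star_dotProduct, dotProduct_comm] at this
    exact this
  -- Step 1: there exists a negative eigenvalue
  have hex : ∃ i, hA.eigenvalues i < 0 := by
    by_contra h
    push_neg at h
    have psd : A.PosSemidef := hA.posSemidef_iff_eigenvalues_nonneg.mpr (fun i => h i)
    obtain ⟨i, j, hij⟩ : ∃ i j, A i j ≠ 0 := by
      by_contra h'
      push_neg at h'
      exact hne (by ext i j; simp [h' i j])
    set v : Fin n → ℂ := Pi.single i 1 + Pi.single j 1 with hv
    have hstar : star v = v := by
      funext k
      simp [hv, Pi.single_apply, apply_ite (starRingEnd ℂ)]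
    have h0 : 0 ≤ dotProduct (star v) (A *ᵥ v) := psd.dotProduct_mulVec_nonneg v
    have hval : dotProduct (star v) (A *ᵥ v) = A i i + A i j + A j i + A j j := by
      rw [hstar, hv]
      simp [Matrix.mulVec_add, Matrix.mulVec_single, add_dotProduct,
        single_dotProduct]
      ring
    rw [hval] at h0
    have hre := (Complex.le_def.mp h0).1
    simp only [Complex.zero_re, Complex.add_re] at hre
    have hijre : (A i j).re < 0 := by
      rcases lt_or_eq_of_le (hentries i j).2 with h1 | h1
      · exact h1
      · exact absurd (Complex.ext h1.symm.symm (by simpa using (hentries i j).1)) hij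
    nlinarith [(hentries i i).2, (hentries j i).2, (hentries j j).2]
  -- Step 2: uniqueness
  have huniq : ∀ k l, hA.eigenvalues k < 0 → hA.eigenvalues l < 0 → k = l := by
    intro k l hk hl
    by_contra hkl
    set u : Fin n → ℂ := ⇑(hA.eigenvectorBasis k) with hu
    set w : Fin n → ℂ := ⇑(hA.eigenvectorBasis l) with hw
    set s : ℂ := ∑ m, u m with hs
    set t : ℂ := ∑ m, w m with ht
    obtain ⟨a, b, hab, habs⟩ : ∃ a b : ℂ, (a ≠ 0 ∨ b ≠ 0) ∧ a * s + b * t = 0 := by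
      by_cases hs0 : s = 0
      · exact ⟨1, 0, Or.inl one_ne_zero, by simp [hs0]⟩
      · exact ⟨t, -s, Or.inr (neg_ne_zero.2 hs0), by ring⟩
    set v : Fin n → ℂ := a • u + b • w with hv
    have hsum : (∑ m, v m) = 0 := by
      simp only [hv, Pi.add_apply, Pi.smul_apply, smul_eq_mul, Finset.sum_add_distrib,
        ← Finset.mul_sum, ← hs, ← ht]
      exact habs
    have hQ := hcpd v hsum
    rw [form_eq_dot] at hQ
    -- compute the quadratic form
    have hAu : A *ᵥ u = ((hA.eigenvalues k : ℂ)) • u := by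
      rw [hu, hA.mulVec_eigenvectorBasis]
      funext m; simp [Complex.real_smul]
    have hAw : A *ᵥ w = ((hA.eigenvalues l : ℂ)) • w := by
      rw [hw, hA.mulVec_eigenvectorBasis]
      funext m; simp [Complex.real_smul]
    have hval : dotProduct (star v) (A *ᵥ v)
        = ((Complex.normSq a * hA.eigenvalues k + Complex.normSq b * hA.eigenvalues l : ℝ) : ℂ) := by
      rw [hv, Matrix.mulVec_add, Matrix.mulVec_smul, Matrix.mulVec_smul, hAu, hAw,
        star_add, star_smul, star_smul]
      simp only [add_dotProduct, dotProduct_add, smul_dotProduct,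
        dotProduct_smul, hu, hw, horth k k, horth k l, horth l k, horth l l,
        if_pos rfl, if_neg hkl, if_neg (Ne.symm hkl), smul_eq_mul, mul_zero, smul_zero,
        mul_one, RCLike.star_def]
      push_cast [Complex.normSq_eq_conj_mul_self]
      ring
    rw [hval] at hQ
    have hQre : (0:ℝ) ≤ Complex.normSq a * hA.eigenvalues k
        + Complex.normSq b * hA.eigenvalues l := by
      have := (Complex.le_def.mp hQ).1
      simpa using this
    have hlt : Complex.normSq a * hA.eigenvalues k
        + Complex.normSq b * hA.eigenvalues l < 0 := by
      rcases hab with ha | hb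
      · have h1 : 0 < Complex.normSq a := Complex.normSq_pos.mpr ha
        nlinarith [Complex.normSq_nonneg b]
      · have h1 : 0 < Complex.normSq b := Complex.normSq_pos.mpr hb
        nlinarith [Complex.normSq_nonneg a]
    linarith
  obtain ⟨i₀, hi₀⟩ := hex
  rw [Finset.card_eq_one]
  refine ⟨i₀, Finset.eq_singleton_iff_unique_mem.mpr ⟨?_, ?_⟩⟩
  · simp [hi₀]
  · intro j hj
    simp only [Finset.mem_filter] at hj
    exact huniq j i₀ hj.2 hi₀
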